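/- For fixed positive integers n and p, all zeros of the polynomial Q_n^p(z) := ∑_{k=0}^{⌊n/2⌋} (S(p,k)/2) C(n,2k) z^k are real and negative, where S(p,k) = C(2p,p)C(2k,k)/C(p+k,p). -/

import Mathlib

/-- The super Catalan number `S(p,k)` as a rational number. -/
def superCatalan (p k : ℕ) : ℚ :=
  (((2 * p).choose p : ℚ) * ((2 * k).choose k : ℚ)) / ((p + k).choose p : ℚ)

open Polynomial Filter Real Finset Topology Set

namespace QnpAux

noncomputable def cc (a : ℕ) (s : ℝ) (j k : ℕ) : ℝ :=
  (j.choose k : ℝ) * (∏ i ∈ Finset.range (j - k), ((a : ℝ) - i)) *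
    (∏ i ∈ Finset.range k, ((a : ℝ) + s - ((j - k : ℕ) : ℝ) - i))

lemma cc_big {a : ℕ} {s : ℝ} {j k : ℕ} (h : j < k) : cc a s j k = 0 := by
  simp [cc, Nat.choose_eq_zero_of_lt h]

lemma cc_rec0 (a : ℕ) (s : ℝ) (j : ℕ) :
    cc a s (j+1) 0 = ((a:ℝ) - j) * cc a s j 0 := by
  simp only [cc, Nat.choose_zero_right, Nat.sub_zero, Nat.cast_one, prod_range_zero,
    prod_range_succ]
  ring

lemma cc_rec (a : ℕ) (s : ℝ) (j k : ℕ) :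
    cc a s (j+1) (k+1)
      = ((a:ℝ) - j + (k+1)) * cc a s j (k+1) + ((a:ℝ) + s - 2*j + k) * cc a s j k := by
  rcases lt_trichotomy k j with hk | rfl | hk
  · -- main case k < j
    set t := j - 1 - k with ht
    have h1 : (j+1) - (k+1) = t + 1 := by omega
    have h2 : j - (k+1) = t := by omega
    have h3 : j - k = t + 1 := by omega
    have hcast : ((t:ℝ)) = (j:ℝ) - 1 - k := by
      have hz : (t : ℤ) = (j:ℤ) - 1 - k := by omega
      have := congrArg (fun z : ℤ => (z:ℝ)) hz
      push_cast at this
      linarith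
    simp only [cc, h1, h2, h3]
    have e1 : ∏ i ∈ range (t+1), ((a:ℝ) - i)
        = (∏ i ∈ range t, ((a:ℝ) - i)) * ((a:ℝ) - ((j:ℝ) - 1 - k)) := by
      rw [prod_range_succ, hcast]
    have e2 : ∏ i ∈ range (k+1), ((a:ℝ) + s - ((t+1 : ℕ) : ℝ) - i)
        = (∏ i ∈ range k, ((a:ℝ) + s - ((t+1:ℕ):ℝ) - i)) * ((a:ℝ) + s - (j:ℝ)) := by
      rw [prod_range_succ]
      congr 1
      push_cast [hcast]
      ring
    have e3 : ∏ i ∈ range (k+1), ((a:ℝ) + s - ((t:ℕ):ℝ) - i)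
        = (∏ i ∈ range k, ((a:ℝ) + s - ((t+1:ℕ):ℝ) - i)) * ((a:ℝ) + s - (j:ℝ) + 1 + k) := by
      rw [prod_range_succ']
      congr 1
      · apply Finset.prod_congr rfl
        intro i _
        push_cast
        ring
      · push_cast [hcast]
        ring
    rw [e1, e2, e3]
    set F : ℝ := ∏ i ∈ range t, ((a:ℝ) - i)
    set W : ℝ := ∏ i ∈ range k, ((a:ℝ) + s - ((t+1:ℕ):ℝ) - i)
    have hc1 : ((j+1).choose (k+1) : ℝ) = (j.choose (k+1) : ℝ) + (j.choose k : ℝ) := by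
      rw [Nat.choose_succ_succ]; push_cast; ring
    have hc2 : ((j:ℝ)+1) * (j.choose k : ℝ) = ((j+1).choose (k+1) : ℝ) * ((k:ℝ)+1) := by
      have hz := Nat.add_one_mul_choose_eq j k
      have := congrArg (fun x : ℕ => (x : ℝ)) hz
      push_cast at this
      linarith
    have key : ((j+1).choose (k+1) : ℝ) * ((a:ℝ) + s - (j:ℝ))
        = (j.choose (k+1) : ℝ) * ((a:ℝ) + s - (j:ℝ) + 1 + k)
          + ((a:ℝ) + s - 2*(j:ℝ) + k) * (j.choose k : ℝ) := by
      rw [hc1]; nlinarith [hc2]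
    push_cast
    linear_combination F * W * ((a:ℝ) - (j:ℝ) + (k:ℝ) + 1) * key
  · -- case k = j (j has been substituted by k)
    simp only [cc, Nat.sub_self, Nat.choose_self, Nat.choose_succ_self, prod_range_zero,
      Nat.cast_zero, Nat.cast_one, sub_zero, Nat.choose_eq_zero_of_lt (Nat.lt_succ_self k)]
    rw [prod_range_succ]
    push_cast
    ring
  · -- case j < k
    rw [cc_big hk, cc_big (by omega : j < k + 1), cc_big (by omega : j + 1 < k + 1)]
    ring

noncomputable def qq (a : ℕ) (s : ℝ) (j : ℕ) : Polynomial ℝ :=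
  ∑ k ∈ Finset.range (j+1), C (cc a s j k) * X^k

lemma qq_coeff (a : ℕ) (s : ℝ) (j k : ℕ) : (qq a s j).coeff k = cc a s j k := by
  rw [qq, finset_sum_coeff]
  simp only [coeff_C_mul, coeff_X_pow, mul_ite, mul_one, mul_zero]
  rw [Finset.sum_ite_eq (Finset.range (j+1)) k (cc a s j)]
  by_cases h : k ∈ Finset.range (j+1)
  · rw [if_pos h]
  · rw [if_neg h, cc_big]
    simpa using h

lemma qq_rec (a : ℕ) (s : ℝ) (j : ℕ) :
    qq a s (j+1)
      = X*(1+X) * derivative (qq a s j)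
        + (C ((a:ℝ) - j) * (1+X) + C (s - (j:ℝ)) * X) * qq a s j := by
  have hD : ∀ i, (derivative (qq a s j)).coeff i = cc a s j (i+1) * ((i:ℝ)+1) := by
    intro i; rw [coeff_derivative, qq_coeff]
  have expand : X*(1+X) * derivative (qq a s j)
        + (C ((a:ℝ) - j) * (1+X) + C (s - (j:ℝ)) * X) * qq a s j
      = X * derivative (qq a s j) + X * (X * derivative (qq a s j))
        + (C ((a:ℝ) - j) * qq a s j + X * (C ((a:ℝ) - j) * qq a s j))
        + X * (C (s - (j:ℝ)) * qq a s j) := by ring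
  rw [expand]
  ext k
  rcases k with _ | k
  · simp only [coeff_add, mul_coeff_zero, coeff_X_zero, zero_mul, coeff_C_mul, coeff_C_zero,
      qq_coeff, cc_rec0, add_zero, zero_add, coeff_one_zero]
  rcases k with _ | k
  · simp only [coeff_add, coeff_X_mul, mul_coeff_zero, coeff_X_zero, zero_mul, coeff_C_mul,
      coeff_C_zero, qq_coeff, hD]
    have := cc_rec a s j 0
    push_cast at this ⊢
    linear_combination this
  · simp only [coeff_add, coeff_X_mul, coeff_C_mul, qq_coeff, hD]
    have := cc_rec a s j (k+1)
    push_cast at this ⊢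
    linear_combination this

noncomputable def gg (a : ℕ) (s : ℝ) (j : ℕ) : ℝ → ℝ :=
  fun x => x ^ (a - j) * (1+x) ^ (s - (j:ℝ)) * eval x (qq a s j)

lemma gg_hasDeriv (a : ℕ) (s : ℝ) (j : ℕ) (hj : j < a) {x : ℝ} (hx : 0 < x) :
    HasDerivAt (gg a s j) (gg a s (j+1) x) x := by
  have h1x : (0:ℝ) < 1 + x := by linarith
  have hpow : HasDerivAt (fun y : ℝ => y ^ (a - j)) (((a - j : ℕ) : ℝ) * x ^ (a - j - 1)) x :=
    hasDerivAt_pow _ x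
  have hrpow : HasDerivAt (fun y : ℝ => (1+y) ^ (s - (j:ℝ)))
      (1 * (s - (j:ℝ)) * (1+x)^(s - (j:ℝ) - 1)) x :=
    HasDerivAt.rpow_const ((hasDerivAt_id x).const_add 1) (Or.inl (ne_of_gt h1x))
  have hq := (qq a s j).hasDerivAt x
  have H := (hpow.mul hrpow).mul hq
  have hev : eval x (qq a s (j+1))
      = x*(1+x)*eval x (derivative (qq a s j))
        + (((a:ℝ)-j)*(1+x) + (s-(j:ℝ))*x) * eval x (qq a s j) := by
    rw [qq_rec]; simp only [eval_add, eval_mul, eval_C, eval_X, eval_one]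
  have e1 : x ^ (a - j) = x ^ (a - (j+1)) * x := by
    rw [show a - j = (a - (j+1)) + 1 by omega, pow_succ]
  have e1' : a - j - 1 = a - (j+1) := by omega
  have e2 : (1+x) ^ (s - (j:ℝ)) = (1+x) ^ (s - ((j+1:ℕ):ℝ)) * (1+x) := by
    rw [← Real.rpow_add_one (ne_of_gt h1x)]
    congr 1
    push_cast; ring
  have e3 : s - (j:ℝ) - 1 = s - ((j+1:ℕ):ℝ) := by push_cast; ring
  have hcastA : ((a - j : ℕ) : ℝ) = (a:ℝ) - j := by
    rw [Nat.cast_sub (le_of_lt hj)]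
  have H' : HasDerivAt (gg a s j) _ x := H
  convert H' using 1
  simp only [Pi.mul_apply]
  rw [gg, hev, e1', e3, hcastA]
  rw [e1, e2]
  ring

lemma gg_tendsto_zero (a : ℕ) (s : ℝ) (j : ℕ) (hj : j < a) :
    Tendsto (gg a s j) (𝓝[>] (0:ℝ)) (𝓝 0) := by
  have hc : ContinuousAt (gg a s j) 0 := by
    apply ContinuousAt.mul
    apply ContinuousAt.mul
    · exact (continuous_pow _).continuousAt
    · have h1 : ContinuousAt (fun y : ℝ => y ^ (s - (j:ℝ))) ((fun x : ℝ => 1 + x) 0) := by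
        apply Real.continuousAt_rpow_const
        norm_num
      exact h1.comp (by fun_prop)
    · exact (qq a s j).continuous.continuousAt
  have h0 : gg a s j 0 = 0 := by
    have : (0:ℝ) ^ (a - j) = 0 := by
      apply zero_pow
      omega
    simp [gg, this]
  have := hc.tendsto
  rw [h0] at this
  exact this.mono_left nhdsWithin_le_nhds

lemma gg_tendsto_atTop (a : ℕ) (s : ℝ) (j : ℕ) (hja : j ≤ a) (hneg : (a:ℝ) + s < 0) :
    Tendsto (gg a s j) atTop (𝓝 0) := by
  set M : ℝ := ∑ k ∈ Finset.range (j+1), |cc a s j k| with hM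
  have hbound : ∀ x : ℝ, 1 ≤ x → ‖gg a s j x‖ ≤ M * x ^ ((a:ℝ) + s) := by
    intro x hx1
    have hx : (0:ℝ) < x := by linarith
    have h1x : (0:ℝ) < 1 + x := by linarith
    have hev : eval x (qq a s j) = ∑ k ∈ Finset.range (j+1), cc a s j k * x ^ k := by
      simp [qq, eval_finset_sum]
    have habs : |eval x (qq a s j)| ≤ M * x ^ j := by
      rw [hev, hM]
      calc |∑ k ∈ Finset.range (j+1), cc a s j k * x ^ k|
          ≤ ∑ k ∈ Finset.range (j+1), |cc a s j k * x ^ k| := Finset.abs_sum_le_sum_abs _ _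
        _ ≤ ∑ k ∈ Finset.range (j+1), |cc a s j k| * x ^ j := by
            apply Finset.sum_le_sum
            intro k hk
            rw [abs_mul, abs_pow, abs_of_pos hx]
            apply mul_le_mul_of_nonneg_left _ (abs_nonneg _)
            exact pow_le_pow_right₀ hx1 (by simpa using Nat.lt_succ_iff.mp (Finset.mem_range.mp hk))
        _ = (∑ k ∈ Finset.range (j+1), |cc a s j k|) * x ^ j := by rw [Finset.sum_mul]
    have hrp : (1+x) ^ (s - (j:ℝ)) ≤ x ^ (s - (j:ℝ)) := by
      apply Real.rpow_le_rpow_of_nonpos hx (by linarith)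
      have : (0:ℝ) ≤ (j:ℝ) := Nat.cast_nonneg j
      nlinarith
    have hfac : (0:ℝ) ≤ x ^ (a - j) := le_of_lt (pow_pos hx _)
    have hfac2 : (0:ℝ) < (1+x) ^ (s - (j:ℝ)) := Real.rpow_pos_of_pos h1x _
    calc ‖gg a s j x‖ = x ^ (a - j) * (1+x) ^ (s - (j:ℝ)) * |eval x (qq a s j)| := by
          rw [gg]
          rw [norm_eq_abs, abs_mul, abs_mul, abs_of_nonneg hfac, abs_of_pos hfac2]
      _ ≤ x ^ (a - j) * x ^ (s - (j:ℝ)) * (M * x ^ j) := by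
          apply mul_le_mul
          · exact mul_le_mul_of_nonneg_left hrp hfac
          · exact habs
          · exact abs_nonneg _
          · positivity
      _ = M * (x ^ (((a - j : ℕ):ℝ)) * x ^ (s - (j:ℝ)) * x ^ ((j:ℕ):ℝ)) := by
          rw [Real.rpow_natCast, Real.rpow_natCast]
          ring
      _ = M * x ^ ((a:ℝ) + s - j) := by
          have hexp : (a:ℝ) + s - j = ((a - j : ℕ):ℝ) + ((s - (j:ℝ)) + ((j:ℕ):ℝ)) := by
            rw [Nat.cast_sub hja]
            push_cast
            ring
          rw [hexp, Real.rpow_add hx, Real.rpow_add hx]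
          ring
      _ ≤ M * x ^ ((a:ℝ) + s) := by
          apply mul_le_mul_of_nonneg_left _ (Finset.sum_nonneg fun k _ => abs_nonneg _)
          apply Real.rpow_le_rpow_of_exponent_le hx1
          have : (0:ℝ) ≤ (j:ℝ) := Nat.cast_nonneg j
          linarith
  have hlim : Tendsto (fun x : ℝ => M * x ^ ((a:ℝ) + s)) atTop (𝓝 0) := by
    have := tendsto_rpow_neg_atTop (y := -((a:ℝ)+s)) (by linarith)
    simp only [neg_neg] at this
    simpa using this.const_mul M
  apply squeeze_zero_norm' _ hlim
  filter_upwards [eventually_ge_atTop (1:ℝ)] with x hx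
  exact hbound x hx

variable {f f' : ℝ → ℝ}

def LeftOK (f : ℝ → ℝ) (u : ℝ) : Prop :=
  (0 < u ∧ f u = 0) ∨ (u = 0 ∧ Tendsto f (𝓝[>] (0:ℝ)) (𝓝 0))

lemma tendsto_right_of_leftOK (hder : ∀ x > (0:ℝ), HasDerivAt f (f' x) x) {u : ℝ}
    (hl : LeftOK f u) : Tendsto f (𝓝[>] u) (𝓝 0) := by
  rcases hl with ⟨hu, hfu⟩ | ⟨rfl, ht⟩
  · have hc : ContinuousAt f u := (hder u hu).continuousAt
    have := hc.tendsto
    rw [hfu] at this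
    exact this.mono_left nhdsWithin_le_nhds
  · exact ht

lemma roll_two (hder : ∀ x > (0:ℝ), HasDerivAt f (f' x) x) {u v : ℝ}
    (hu : 0 ≤ u) (huv : u < v) (hl : LeftOK f u) (hfv : f v = 0) :
    ∃ c ∈ Ioo u v, f' c = 0 := by
  apply exists_hasDerivAt_eq_zero' huv (tendsto_right_of_leftOK hder hl)
  · have hv : 0 < v := lt_of_le_of_lt hu huv
    have hc : ContinuousAt f v := (hder v hv).continuousAt
    have := hc.tendsto
    rw [hfv] at this
    exact this.mono_left nhdsWithin_le_nhds
  · intro x hx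
    exact hder x (lt_of_le_of_lt hu hx.1)

lemma roll_inf (hder : ∀ x > (0:ℝ), HasDerivAt f (f' x) x) {u : ℝ}
    (hu : 0 ≤ u) (hl : LeftOK f u) (hinf : Tendsto f atTop (𝓝 0)) :
    ∃ c, u < c ∧ f' c = 0 := by
  set φ : ℝ → ℝ := fun t => u + t / (1 - t) with hφ
  have hφpos : ∀ t ∈ Ioo (0:ℝ) 1, u < φ t := by
    intro t ht
    have h1t : 0 < 1 - t := by linarith [ht.2]
    have : 0 < t / (1 - t) := div_pos ht.1 h1t
    simp only [hφ]
    linarith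
  have hφd : ∀ t ∈ Ioo (0:ℝ) 1, HasDerivAt φ ((1*(1-t) - t*(-1))/(1-t)^2) t := by
    intro t ht
    have h1t : (1:ℝ) - t ≠ 0 := by have := ht.2; intro h; linarith
    exact ((hasDerivAt_id t).div ((hasDerivAt_id t).const_sub 1) h1t).const_add u
  have hcomp : ∀ t ∈ Ioo (0:ℝ) 1,
      HasDerivAt (f ∘ φ) (f' (φ t) * ((1*(1-t) - t*(-1))/(1-t)^2)) t := by
    intro t ht
    exact (hder (φ t) (lt_of_le_of_lt hu (hφpos t ht))).comp t (hφd t ht)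
  have hφcont : ContinuousAt φ 0 := by
    apply ContinuousAt.add continuousAt_const
    apply ContinuousAt.div continuousAt_id (by fun_prop)
    norm_num
  have hφ0 : φ 0 = u := by simp [hφ]
  have ta : Tendsto (f ∘ φ) (𝓝[>] (0:ℝ)) (𝓝 0) := by
    have hmem : Ioo (0:ℝ) 1 ∈ 𝓝[>] (0:ℝ) := Ioo_mem_nhdsGT_of_mem (by norm_num)
    have hφt : Tendsto φ (𝓝[>] (0:ℝ)) (𝓝[>] u) := by
      rw [tendsto_nhdsWithin_iff]
      constructor
      · have := hφcont.tendsto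
        rw [hφ0] at this
        exact this.mono_left nhdsWithin_le_nhds
      · filter_upwards [hmem] with t ht
        exact hφpos t ht
    exact (tendsto_right_of_leftOK hder hl).comp hφt
  have tb : Tendsto (f ∘ φ) (𝓝[<] (1:ℝ)) (𝓝 0) := by
    have h1 : Tendsto (fun t : ℝ => 1 - t) (𝓝[<] (1:ℝ)) (𝓝[>] (0:ℝ)) := by
      rw [tendsto_nhdsWithin_iff]
      constructor
      · have h0 : Continuous (fun t : ℝ => 1 - t) := continuous_const.sub continuous_id
        have := h0.tendsto 1
        norm_num at this
        exact this.mono_left nhdsWithin_le_nhds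
      · filter_upwards [self_mem_nhdsWithin] with t (ht : t < 1)
        simp [ht]
    have h2 : Tendsto (fun t : ℝ => (1 - t)⁻¹) (𝓝[<] (1:ℝ)) atTop :=
      tendsto_inv_nhdsGT_zero.comp h1
    have h3 : Tendsto (fun t : ℝ => t * (1 - t)⁻¹) (𝓝[<] (1:ℝ)) atTop := by
      apply Filter.Tendsto.pos_mul_atTop (zero_lt_one) _ h2
      exact tendsto_id.mono_left nhdsWithin_le_nhds
    have h4 : Tendsto φ (𝓝[<] (1:ℝ)) atTop := by
      have := tendsto_atTop_add_const_left _ u h3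
      apply this.congr
      intro t
      simp [hφ, div_eq_mul_inv]
    exact hinf.comp h4
  obtain ⟨c, hc, hc0⟩ := exists_hasDerivAt_eq_zero' zero_lt_one ta tb hcomp
  refine ⟨φ c, hφpos c hc, ?_⟩
  have h1c : (1:ℝ) - c ≠ 0 := by have := hc.2; intro h; linarith
  have hD : (1*(1-c) - c*(-1))/(1-c)^2 ≠ 0 := by
    rw [div_ne_zero_iff]
    constructor
    · intro h; nlinarith [hc.1, hc.2]
    · positivity
  exact (mul_eq_zero.mp hc0).resolve_right hD

/-- The interleaving step: given an increasing list of zeros of `f` above `u`,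
    produce one more zero of `f'`, interleaved. -/
lemma interleave (hder : ∀ x > (0:ℝ), HasDerivAt f (f' x) x)
    (hinf : Tendsto f atTop (𝓝 0)) :
    ∀ (l : List ℝ) (u : ℝ), 0 ≤ u → LeftOK f u → (∀ x ∈ l, u < x) →
      l.Chain' (· < ·) → (∀ x ∈ l, f x = 0) →
      ∃ l' : List ℝ, l'.length = l.length + 1 ∧ l'.Chain' (· < ·) ∧
        (∀ x ∈ l', u < x ∧ f' x = 0) := by
  intro l
  induction l with
  | nil =>
    intro u hu hl _ _ _
    obtain ⟨c, hc, hc0⟩ := roll_inf hder hu hl hinf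
    exact ⟨[c], rfl, List.isChain_singleton c, by
      intro x hx
      simp at hx
      subst hx
      exact ⟨hc, hc0⟩⟩
  | cons v t ih =>
    intro u hu hl hgt hchain hzero
    have huv : u < v := hgt v (by simp)
    obtain ⟨c, hc, hc0⟩ := roll_two hder hu huv hl (hzero v (by simp))
    have hv : 0 < v := lt_of_le_of_lt hu huv
    obtain ⟨l'', hlen, hchain'', hprop⟩ := ih v (le_of_lt hv)
      (Or.inl ⟨hv, hzero v (by simp)⟩)
      (by
        intro x hx
        have hp := List.isChain_iff_pairwise.mp hchain
        exact (List.pairwise_cons.mp hp).1 x hx)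
      (hchain.tail)
      (fun x hx => hzero x (by simp [hx]))
    refine ⟨c :: l'', by simp [hlen], ?_, ?_⟩
    · rw [List.Chain', List.isChain_cons]
      refine ⟨?_, hchain''⟩
      intro y hy
      have hy' : y ∈ l'' := List.mem_of_mem_head? hy
      exact lt_trans hc.2 (hprop y hy').1
    · intro x hx
      rcases List.mem_cons.mp hx with rfl | hx
      · exact ⟨hc.1, hc0⟩
      · exact ⟨lt_trans huv (hprop x hx).1, (hprop x hx).2⟩

lemma exists_roots (a : ℕ) (s : ℝ) (m : ℕ) (hma : m < a) (hneg : (a:ℝ) + s < 0) :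
    ∃ l : List ℝ, l.length = m ∧ l.Chain' (· < ·) ∧
      ∀ x ∈ l, 0 < x ∧ eval x (qq a s m) = 0 := by
  induction m with
  | zero => exact ⟨[], rfl, List.isChain_nil, by simp⟩
  | succ j ih =>
    obtain ⟨l, hlen, hchain, hroots⟩ := ih (by omega)
    have hja : j < a := by omega
    obtain ⟨l', hlen', hchain', hprop'⟩ :=
      interleave (f := gg a s j) (f' := gg a s (j+1))
        (fun x hx => gg_hasDeriv a s j hja hx)
        (gg_tendsto_atTop a s j (le_of_lt hja) hneg)
        l 0 le_rfl
        (Or.inr ⟨rfl, gg_tendsto_zero a s j hja⟩)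
        (fun x hx => (hroots x hx).1)
        hchain
        (by
          intro x hx
          have := (hroots x hx).2
          simp [gg, this])
    refine ⟨l', by omega, hchain', ?_⟩
    intro x hx
    obtain ⟨hx0, hg0⟩ := hprop' x hx
    refine ⟨hx0, ?_⟩
    have h1x : (0:ℝ) < 1 + x := by linarith
    have hne1 : x ^ (a - (j+1)) ≠ 0 := pow_ne_zero _ (ne_of_gt hx0)
    have hne2 : (1+x) ^ (s - ((j+1:ℕ):ℝ)) ≠ 0 := ne_of_gt (Real.rpow_pos_of_pos h1x _)
    have := hg0
    rw [gg] at this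
    rcases mul_eq_zero.mp this with h | h
    · rcases mul_eq_zero.mp h with h' | h'
      · exact absurd h' hne1
      · exact absurd h' hne2
    · exact h

lemma natkey (e m : ℕ) (he : e ≤ 1) :
    ∀ k ≤ m, (2*m+e).factorial * (m-k).factorial
      = (2*(m-k)+e).factorial * m.factorial * 2^k * ∏ i ∈ range k, (2*(m-k+i)+1+2*e) := by
  intro k
  induction k with
  | zero => simp
  | succ k ih =>
    intro hk1
    have hk : k ≤ m := by omega
    have ihk := ih hk
    set w := m - (k+1) with hw
    have hmk : m - k = w + 1 := by omega
    have hprod : ∏ i ∈ range (k+1), (2*(m-(k+1)+i)+1+2*e)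
        = (2*w+1+2*e) * ∏ i ∈ range k, (2*(m-k+i)+1+2*e) := by
      rw [prod_range_succ', mul_comm]
      congr 1
      apply Finset.prod_congr rfl
      intro i _
      congr 1
      omega
    have hfac1 : (m-k).factorial = (w+1) * w.factorial := by
      rw [hmk, Nat.factorial_succ]
    have hfac2 : (2*(m-k)+e).factorial
        = (2*w+e).factorial * ((2*w+e+1) * (2*w+e+2)) := by
      have h1 : 2*(m-k)+e = (2*w+e+1) + 1 := by omega
      rw [h1, Nat.factorial_succ, Nat.factorial_succ]
      ring
    have hcancel : (2*w+e+1) * (2*w+e+2) = 2 * ((w+1) * (2*w+1+2*e)) := by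
      interval_cases e <;> ring
    apply Nat.eq_of_mul_eq_mul_left (show 0 < w + 1 by omega)
    calc (w+1) * ((2*m+e).factorial * w.factorial)
        = (2*m+e).factorial * ((w+1) * w.factorial) := by ring
      _ = (2*m+e).factorial * (m-k).factorial := by rw [hfac1]
      _ = (2*(m-k)+e).factorial * m.factorial * 2^k * ∏ i ∈ range k, (2*(m-k+i)+1+2*e) := ihk
      _ = (2*w+e).factorial * ((2*w+e+1) * (2*w+e+2)) * m.factorial * 2^k
            * ∏ i ∈ range k, (2*(m-k+i)+1+2*e) := by rw [hfac2]
      _ = (2*w+e).factorial * (2 * ((w+1) * (2*w+1+2*e))) * m.factorial * 2^k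
            * ∏ i ∈ range k, (2*(m-k+i)+1+2*e) := by rw [hcancel]
      _ = (w+1) * ((2*w+e).factorial * m.factorial * 2^(k+1)
            * ((2*w+1+2*e) * ∏ i ∈ range k, (2*(m-k+i)+1+2*e))) := by ring
      _ = (w+1) * ((2*(m-(k+1))+e).factorial * m.factorial * 2^(k+1)
            * ∏ i ∈ range (k+1), (2*(m-(k+1)+i)+1+2*e)) := by rw [hprod, hw]

lemma keyR (p m e k : ℕ) (he : e ≤ 1) (hk : k ≤ m) :
    (m.choose k : ℝ) * ((p+m).descFactorial (m-k) : ℝ)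
      * ((∏ i ∈ range k, (2*(m-k+i)+1+2*e) : ℕ) : ℝ)
      * (p.factorial : ℝ) * ((p+k).choose p : ℝ) * (2:ℝ)^k
    = ((p+m).factorial : ℝ) * ((2*k).choose k : ℝ) * ((2*m+e).choose (2*k) : ℝ) := by
  have hdF : ((p+k).factorial : ℝ) * ((p+m).descFactorial (m-k) : ℝ) = ((p+m).factorial : ℝ) := by
    have h := Nat.factorial_mul_descFactorial (show m - k ≤ p + m by omega)
    have h2 : p + m - (m - k) = p + k := by omega
    rw [h2] at h
    exact_mod_cast congrArg (fun x : ℕ => (x:ℝ)) h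
  have hch1 : (m.choose k : ℝ) * (k.factorial : ℝ) * ((m-k).factorial : ℝ) = (m.factorial : ℝ) := by
    exact_mod_cast congrArg (fun x : ℕ => (x:ℝ)) (Nat.choose_mul_factorial_mul_factorial hk)
  have hch2 : ((p+k).choose p : ℝ) * (p.factorial : ℝ) * (k.factorial : ℝ) = ((p+k).factorial : ℝ) := by
    have := Nat.choose_mul_factorial_mul_factorial (show p ≤ p + k by omega)
    have h2 : p + k - p = k := by omega
    rw [h2] at this
    exact_mod_cast congrArg (fun x : ℕ => (x:ℝ)) this
  have hch3 : ((2*k).choose k : ℝ) * (k.factorial : ℝ) * (k.factorial : ℝ) = ((2*k).factorial : ℝ) := by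
    have := Nat.choose_mul_factorial_mul_factorial (show k ≤ 2*k by omega)
    have h2 : 2*k - k = k := by omega
    rw [h2] at this
    exact_mod_cast congrArg (fun x : ℕ => (x:ℝ)) this
  have hch4 : ((2*m+e).choose (2*k) : ℝ) * ((2*k).factorial : ℝ) * ((2*m+e-2*k).factorial : ℝ)
      = ((2*m+e).factorial : ℝ) := by
    exact_mod_cast congrArg (fun x : ℕ => (x:ℝ))
      (Nat.choose_mul_factorial_mul_factorial (show 2*k ≤ 2*m+e by omega))
  have hnk : ((2*m+e).factorial : ℝ) * ((m-k).factorial : ℝ)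
      = ((2*(m-k)+e).factorial : ℝ) * (m.factorial : ℝ) * (2:ℝ)^k
        * ((∏ i ∈ range k, (2*(m-k+i)+1+2*e) : ℕ) : ℝ) := by
    exact_mod_cast congrArg (fun x : ℕ => (x:ℝ)) (natkey e m he k hk)
  have hrw : (2*(m-k)+e) = 2*m+e-2*k := by omega
  rw [hrw] at hnk
  have hE : ((k.factorial : ℝ) * k.factorial * (m-k).factorial * (2*m+e-2*k).factorial) ≠ 0 := by
    have h1 : (0:ℝ) < k.factorial := by exact_mod_cast k.factorial_pos
    have h2 : (0:ℝ) < (m-k).factorial := by exact_mod_cast (m-k).factorial_pos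
    have h3 : (0:ℝ) < (2*m+e-2*k).factorial := by exact_mod_cast (2*m+e-2*k).factorial_pos
    positivity
  apply mul_right_cancel₀ hE
  calc (m.choose k : ℝ) * ((p+m).descFactorial (m-k) : ℝ)
      * ((∏ i ∈ range k, (2*(m-k+i)+1+2*e) : ℕ) : ℝ)
      * (p.factorial : ℝ) * ((p+k).choose p : ℝ) * (2:ℝ)^k
      * ((k.factorial : ℝ) * k.factorial * (m-k).factorial * (2*m+e-2*k).factorial)
      = ((m.choose k : ℝ) * k.factorial * (m-k).factorial)
        * (((p+k).choose p : ℝ) * p.factorial * k.factorial)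
        * (((p+m).descFactorial (m-k) : ℝ)
          * ((∏ i ∈ range k, (2*(m-k+i)+1+2*e) : ℕ) : ℝ) * (2:ℝ)^k
          * ((2*m+e-2*k).factorial : ℝ)) := by ring
    _ = (m.factorial : ℝ) * ((p+k).factorial : ℝ)
        * (((p+m).descFactorial (m-k) : ℝ)
          * ((∏ i ∈ range k, (2*(m-k+i)+1+2*e) : ℕ) : ℝ) * (2:ℝ)^k
          * ((2*m+e-2*k).factorial : ℝ)) := by rw [hch1, hch2]
    _ = ((p+k).factorial : ℝ) * ((p+m).descFactorial (m-k) : ℝ)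
        * ((m.factorial : ℝ)
          * ((∏ i ∈ range k, (2*(m-k+i)+1+2*e) : ℕ) : ℝ) * (2:ℝ)^k
          * ((2*m+e-2*k).factorial : ℝ)) := by ring
    _ = ((p+m).factorial : ℝ)
        * ((m.factorial : ℝ)
          * ((∏ i ∈ range k, (2*(m-k+i)+1+2*e) : ℕ) : ℝ) * (2:ℝ)^k
          * ((2*m+e-2*k).factorial : ℝ)) := by rw [hdF]
    _ = ((p+m).factorial : ℝ)
        * (((2*m+e-2*k).factorial : ℝ) * (m.factorial : ℝ) * (2:ℝ)^k
          * ((∏ i ∈ range k, (2*(m-k+i)+1+2*e) : ℕ) : ℝ)) := by ring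
    _ = ((p+m).factorial : ℝ) * (((2*m+e).factorial : ℝ) * ((m-k).factorial : ℝ)) := by
          rw [← hnk]
    _ = ((p+m).factorial : ℝ)
        * ((((2*m+e).choose (2*k) : ℝ) * ((2*k).factorial : ℝ)
            * ((2*m+e-2*k).factorial : ℝ)) * ((m-k).factorial : ℝ)) := by rw [hch4]
    _ = ((p+m).factorial : ℝ)
        * ((((2*m+e).choose (2*k) : ℝ) * (((2*k).choose k : ℝ) * k.factorial * k.factorial)
            * ((2*m+e-2*k).factorial : ℝ)) * ((m-k).factorial : ℝ)) := by rw [hch3]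
    _ = ((p+m).factorial : ℝ) * ((2*k).choose k : ℝ) * ((2*m+e).choose (2*k) : ℝ)
        * ((k.factorial : ℝ) * k.factorial * (m-k).factorial * (2*m+e-2*k).factorial) := by
          ring

lemma prod_desc (a t : ℕ) (ht : t ≤ a) :
    ∏ i ∈ range t, ((a:ℝ) - (i:ℝ)) = (a.descFactorial t : ℝ) := by
  rw [Nat.descFactorial_eq_prod_range, Nat.cast_prod]
  apply Finset.prod_congr rfl
  intro i hi
  have hit := Finset.mem_range.mp hi
  rw [Nat.cast_sub (by omega : i ≤ a)]

lemma cc_closed (p m e k : ℕ) (hp : 0 < p) (he : e ≤ 1) (hk : k ≤ m) (s : ℝ)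
    (has : ((p+m : ℕ):ℝ) + s = -(1/2) - e) :
    cc (p+m) s m k
      = (2 * ((p+m).factorial : ℝ) / (((2*p).choose p : ℝ) * (p.factorial : ℝ)))
        * (((superCatalan p k / 2 : ℚ)) : ℝ) * (((2*m+e).choose (2*k) : ℕ) : ℝ)
        * (-(1/4 : ℝ))^k := by
  have h1 : ∏ i ∈ range (m - k), (((p+m:ℕ) : ℝ) - i) = ((p+m).descFactorial (m-k) : ℝ) :=
    prod_desc (p+m) (m-k) (by omega)
  have h2 : ∏ i ∈ range k, (((p+m:ℕ):ℝ) + s - ((m - k : ℕ) : ℝ) - i)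
      = ((∏ i ∈ range k, (2*(m-k+i)+1+2*e) : ℕ) : ℝ) * (-(1/2:ℝ))^k := by
    calc ∏ i ∈ range k, (((p+m:ℕ):ℝ) + s - ((m - k : ℕ) : ℝ) - i)
        = ∏ i ∈ range k, ((((2*(m-k+i)+1+2*e : ℕ)):ℝ) * (-(1/2:ℝ))) := by
          apply Finset.prod_congr rfl
          intro i _
          rw [has]
          push_cast
          ring
      _ = ((∏ i ∈ range k, (2*(m-k+i)+1+2*e) : ℕ) : ℝ) * (-(1/2:ℝ))^k := by
          rw [Finset.prod_mul_distrib, Finset.prod_const, card_range, Nat.cast_prod]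
  have hsc : ((superCatalan p k / 2 : ℚ) : ℝ)
      = ((2*p).choose p : ℝ) * ((2*k).choose k : ℝ) / (((p+k).choose p : ℝ) * 2) := by
    rw [superCatalan]
    push_cast
    ring
  have hc2p : ((2*p).choose p : ℝ) ≠ 0 := by
    have := Nat.choose_pos (show p ≤ 2*p by omega)
    positivity
  have hpf : (p.factorial : ℝ) ≠ 0 := by
    have := p.factorial_pos
    positivity
  have hcpk : ((p+k).choose p : ℝ) ≠ 0 := by
    have := Nat.choose_pos (show p ≤ p+k by omega)
    positivity
  have hpow : (-(1/4:ℝ))^k = (-(1/2:ℝ))^k * (1/2:ℝ)^k := by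
    rw [← mul_pow]
    norm_num
  have h2k : (2:ℝ)^k * (1/2:ℝ)^k = 1 := by
    rw [← mul_pow]
    norm_num
  rw [cc, h1, h2, hsc, hpow]
  set PiR : ℝ := ((∏ i ∈ range k, (2*(m-k+i)+1+2*e) : ℕ) : ℝ) with hPi
  have key := keyR p m e k he hk
  rw [← hPi] at key
  field_simp
  linear_combination (1/2:ℝ)^k * key
    - ((m.choose k : ℝ) * ((p+m).descFactorial (m-k) : ℝ) * PiR * (p.factorial : ℝ) * ((p+k).choose p : ℝ)) * h2k

end QnpAux

open QnpAux

/-- All zeros of `Q_n^p(z) = ∑_{k=0}^{⌊n/2⌋} (S(p,k)/2) C(n,2k) z^k` are real and negative. -/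
theorem Qnp_real_negative_zeros (n p : ℕ) (hn : 0 < n) (hp : 0 < p) :
    ∀ z : ℂ,
      (∑ k ∈ Finset.range (n / 2 + 1),
          ((superCatalan p k / 2 : ℚ) : ℂ) * ((n.choose (2 * k) : ℂ)) * z ^ k) = 0 →
      ∃ x : ℝ, x < 0 ∧ z = (x : ℂ) := by
  intro z hz
  set m := n / 2 with hm
  set e := n % 2 with he
  have he1 : e ≤ 1 := by omega
  have hn2 : 2 * m + e = n := by omega
  set s : ℝ := -((p+m : ℕ):ℝ) - 1/2 - e with hs
  have has : ((p+m : ℕ):ℝ) + s = -(1/2) - e := by rw [hs]; ring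
  have hneg : ((p+m : ℕ):ℝ) + s < 0 := by
    rw [has]
    have h0 : (0:ℝ) ≤ (e:ℝ) := Nat.cast_nonneg e
    linarith
  have hma : m < p + m := by omega
  obtain ⟨l, hlen, hchain, hroots⟩ := exists_roots (p+m) s m hma hneg
  set r0R : ℝ := 2 * ((p+m).factorial : ℝ) / (((2*p).choose p : ℝ) * (p.factorial : ℝ)) with hr0
  have hr0pos : 0 < r0R := by
    rw [hr0]
    have h1 : (0:ℝ) < ((2*p).choose p : ℝ) := by
      exact_mod_cast Nat.choose_pos (show p ≤ 2*p by omega)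
    have h2 : (0:ℝ) < (p.factorial : ℝ) := by exact_mod_cast p.factorial_pos
    have h3 : (0:ℝ) < ((p+m).factorial : ℝ) := by exact_mod_cast (p+m).factorial_pos
    positivity
  -- step A: the real coefficient sum vanishes at -x/4 for each root x of qq
  have hSR : ∀ x ∈ l, (∑ k ∈ Finset.range (m+1),
      ((superCatalan p k / 2 : ℚ):ℝ) * ((n.choose (2*k)):ℝ) * (-x/4)^k) = 0 := by
    intro x hx
    obtain ⟨hxpos, hxroot⟩ := hroots x hx
    have heval : eval x (qq (p+m) s m) = ∑ k ∈ Finset.range (m+1), cc (p+m) s m k * x^k := by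
      rw [qq, eval_finset_sum]
      apply Finset.sum_congr rfl
      intro k _
      simp
    have hterm : ∀ k ∈ Finset.range (m+1), cc (p+m) s m k * x^k
        = r0R * (((superCatalan p k / 2 : ℚ):ℝ) * ((n.choose (2*k)):ℝ) * (-x/4)^k) := by
      intro k hk
      have hkm : k ≤ m := Nat.lt_succ_iff.mp (Finset.mem_range.mp hk)
      rw [cc_closed p m e k hp he1 hkm s has, hn2, ← hr0]
      rw [show ((-x/4 : ℝ))^k = (-(1/4:ℝ))^k * x^k from by rw [← mul_pow]; congr 1; ring]
      ring
    rw [heval, Finset.sum_congr rfl hterm, ← Finset.mul_sum] at hxroot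
    rcases mul_eq_zero.mp hxroot with h | h
    · exact absurd h (ne_of_gt hr0pos)
    · exact h
  -- the complex polynomial
  set PC : Polynomial ℂ := ∑ k ∈ Finset.range (m+1),
      C (((superCatalan p k / 2 : ℚ) : ℂ) * ((n.choose (2*k) : ℂ))) * X^k with hPC
  have hPCeval : ∀ w : ℂ, eval w PC
      = ∑ k ∈ Finset.range (m+1),
          ((superCatalan p k / 2 : ℚ) : ℂ) * ((n.choose (2*k) : ℂ)) * w^k := by
    intro w
    rw [hPC, eval_finset_sum]
    apply Finset.sum_congr rfl
    intro k _
    simp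
  have hdeg : PC.natDegree ≤ m := by
    rw [hPC]
    apply natDegree_sum_le_of_forall_le
    intro k hk
    exact le_trans (natDegree_C_mul_X_pow_le _ _) (Nat.lt_succ_iff.mp (Finset.mem_range.mp hk))
  have hPCcoeff : PC.coeff m = ((superCatalan p m / 2 : ℚ) : ℂ) * ((n.choose (2*m) : ℂ)) := by
    rw [hPC, finset_sum_coeff]
    simp only [coeff_C_mul, coeff_X_pow, mul_ite, mul_one, mul_zero]
    rw [Finset.sum_ite_eq (Finset.range (m+1)) m
      (fun k => ((superCatalan p k / 2 : ℚ) : ℂ) * ((n.choose (2*k) : ℂ)))]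
    simp
  have hscpos : (0:ℚ) < superCatalan p m / 2 := by
    rw [superCatalan]
    have h1 : (0:ℚ) < ((2*p).choose p : ℚ) := by
      exact_mod_cast Nat.choose_pos (show p ≤ 2*p by omega)
    have h2 : (0:ℚ) < ((2*m).choose m : ℚ) := by
      exact_mod_cast Nat.choose_pos (show m ≤ 2*m by omega)
    have h3 : (0:ℚ) < ((p+m).choose p : ℚ) := by
      exact_mod_cast Nat.choose_pos (show p ≤ p+m by omega)
    positivity
  have hPCne : PC ≠ 0 := by
    intro h
    have h2 : PC.coeff m = 0 := by rw [h]; simp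
    rw [hPCcoeff] at h2
    rcases mul_eq_zero.mp h2 with h3 | h3
    · exact absurd h3 (Rat.cast_ne_zero.mpr (ne_of_gt hscpos))
    · have : 0 < n.choose (2*m) := Nat.choose_pos (by omega)
      exact absurd h3 (Nat.cast_ne_zero.mpr (Nat.pos_iff_ne_zero.mp this))
  -- the list of complex roots
  set f : ℝ → ℂ := fun x => ((-x/4 : ℝ) : ℂ) with hf
  set L : List ℂ := l.map f with hL
  have hLroot : ∀ w ∈ L, PC.IsRoot w := by
    intro w hw
    obtain ⟨x, hxl, hfx⟩ := List.mem_map.mp hw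
    rw [IsRoot, ← hfx, hPCeval, hf]
    have hcast := congrArg (fun t : ℝ => (t : ℂ)) (hSR x hxl)
    push_cast at hcast ⊢
    exact hcast
  have hLnodup : L.Nodup := by
    rw [hL]
    have hpair := List.isChain_iff_pairwise.mp hchain
    exact List.Pairwise.map f (fun a b hab hEq => by
      rw [hf] at hEq
      simp only [Complex.ofReal_inj] at hEq
      have hab2 : a = b := by
        have : -a/4 = -b/4 := hEq
        linarith
      exact absurd hab2 (ne_of_lt hab)) hpair
  by_cases hzL : z ∈ L
  · obtain ⟨x, hxl, hfx⟩ := List.mem_map.mp hzL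
    refine ⟨-x/4, ?_, ?_⟩
    · have := (hroots x hxl).1
      linarith
    · rw [← hfx, hf]
  · exfalso
    set S' : Finset ℂ := insert z L.toFinset with hS'
    have hzroot : PC.IsRoot z := by
      rw [IsRoot, hPCeval]
      exact hz
    have hallroot : ∀ w ∈ S', PC.IsRoot w := by
      intro w hw
      rcases Finset.mem_insert.mp hw with rfl | hw2
      · exact hzroot
      · exact hLroot w (List.mem_toFinset.mp hw2)
    have hcard : S'.card = m + 1 := by
      rw [hS', Finset.card_insert_of_notMem (fun hmem => hzL (List.mem_toFinset.mp hmem))]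
      rw [List.toFinset_card_of_nodup hLnodup, hL, List.length_map, hlen]
    have hle : S'.val ≤ PC.roots := by
      rw [Multiset.le_iff_count]
      intro w
      by_cases hw : w ∈ S'
      · have h1 : Multiset.count w S'.val ≤ 1 := Multiset.nodup_iff_count_le_one.mp S'.nodup w
        have h2 : 1 ≤ Multiset.count w PC.roots := by
          rw [count_roots]
          exact (rootMultiplicity_pos hPCne).mpr (hallroot w hw)
        omega
      · have h0 : Multiset.count w S'.val = 0 := by
          rw [Multiset.count_eq_zero]
          exact fun hmem => hw (Finset.mem_def.mpr hmem)
        omega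
    have hcard2 : Multiset.card PC.roots ≤ m := le_trans (card_roots' PC) hdeg
    have hcard3 := Multiset.card_le_card hle
    have hcard4 : Multiset.card S'.val = S'.card := rfl
    omega
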